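/- Let 𝐙 be a nilpotent supermatrix over Λ_N (all entries in Λ_N^+) such that e^𝐙 ∈ O_0, i.e. (e^𝐙)^{ST} Q e^𝐙 = Q. Then 𝐙^{ST} Q + Q 𝐙 = 0. -/

import Mathlib

open Matrix

noncomputable section
noncomputable section

/-- The Grassmann algebra `Λ_N` over `ℝ`. -/
abbrev GA (N : ℕ) := ExteriorAlgebra ℝ (Fin N → ℝ)

/-- Even elements of the Grassmann algebra. -/
def GA.IsEven {N : ℕ} (x : GA N) : Prop :=
  x ∈ CliffordAlgebra.evenOdd (0 : QuadraticForm ℝ (Fin N → ℝ)) 0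

/-- Odd elements of the Grassmann algebra. -/
def GA.IsOdd {N : ℕ} (x : GA N) : Prop :=
  x ∈ CliffordAlgebra.evenOdd (0 : QuadraticForm ℝ (Fin N → ℝ)) 1

/-- The standard symplectic matrix `Ω_{2n}`, block-diagonal with 2×2 blocks `(0,1;−1,0)`. -/
def OmegaR (n : ℕ) : Matrix (Fin (2*n)) (Fin (2*n)) ℝ :=
  Matrix.of fun i j => if (i:ℕ) % 2 = 0 ∧ (j:ℕ) = (i:ℕ) + 1 then 1
    else if (j:ℕ) % 2 = 0 ∧ (i:ℕ) = (j:ℕ) + 1 then -1 else 0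

/-- `Ω_{2n}` viewed with entries in the Grassmann algebra. -/
def OmegaL (N n : ℕ) : Matrix (Fin (2*n)) (Fin (2*n)) (GA N) :=
  (OmegaR n).map (algebraMap ℝ (GA N))

/-- The supermatrix `Q = diag(I_m, −½Ω_{2n})`. -/
def Qm (N m n : ℕ) : Matrix (Fin m ⊕ Fin (2*n)) (Fin m ⊕ Fin (2*n)) (GA N) :=
  Matrix.fromBlocks 1 0 0 (-((1/2 : ℝ) • OmegaL N n))

/-- The supertranspose `M^{ST} = (Aᵀ, C'ᵀ; −B'ᵀ, Dᵀ)`. -/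
def superT {N m k : ℕ} (M : Matrix (Fin m ⊕ Fin k) (Fin m ⊕ Fin k) (GA N)) :
    Matrix (Fin m ⊕ Fin k) (Fin m ⊕ Fin k) (GA N) :=
  Matrix.fromBlocks (M.toBlocks₁₁)ᵀ (M.toBlocks₂₁)ᵀ (-(M.toBlocks₁₂)ᵀ) (M.toBlocks₂₂)ᵀ

def IsSuperMat {N m k : ℕ} (M : Matrix (Fin m ⊕ Fin k) (Fin m ⊕ Fin k) (GA N)) : Prop :=
  (∀ i j, (M.toBlocks₁₁ i j).IsEven) ∧ (∀ i j, (M.toBlocks₁₂ i j).IsOdd) ∧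
  (∀ i j, (M.toBlocks₂₁ i j).IsOdd) ∧ (∀ i j, (M.toBlocks₂₂ i j).IsEven)

/-- The exponential of a supermatrix all of whose entries are nilpotent (zero body):
since such a matrix satisfies `M^(N+1) = 0`, the exponential series is the finite sum
`∑_{j=0}^{N} M^j / j!`. -/
def expNil {N m k : ℕ} (M : Matrix (Fin m ⊕ Fin k) (Fin m ⊕ Fin k) (GA N)) :
    Matrix (Fin m ⊕ Fin k) (Fin m ⊕ Fin k) (GA N) :=
  ∑ j ∈ Finset.range (N + 1), (j.factorial : ℝ)⁻¹ • M ^ j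

namespace O0Aux

open ExteriorAlgebra

variable {N : ℕ}

noncomputable abbrev Jmod (N : ℕ) : Submodule ℝ (GA N) :=
  LinearMap.range (ι ℝ : (Fin N → ℝ) →ₗ[ℝ] GA N)

/-! ### Supercommutativity of the Grassmann algebra -/

theorem evenOdd_eq_iSup (i : ZMod 2) :
    CliffordAlgebra.evenOdd (0 : QuadraticForm ℝ (Fin N → ℝ)) i
      = ⨆ j : { n : ℕ // (n : ZMod 2) = i }, Jmod N ^ (j : ℕ) := rfl

theorem sign_eq {p q : ℕ} {i j : ZMod 2} (hp : (p : ZMod 2) = i) (hq : (q : ZMod 2) = j) :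
    ((-1:ℝ))^(p*q) = if i = 1 ∧ j = 1 then (-1:ℝ) else 1 := by
  rcases Nat.even_or_odd p with hp' | hp'
  · have : i = 0 := by
      rw [← hp, ZMod.natCast_eq_zero_iff]; exact hp'.two_dvd
    rw [Even.neg_one_pow (hp'.mul_right q), if_neg (by simp [this])]
  · rcases Nat.even_or_odd q with hq' | hq'
    · have : j = 0 := by
        rw [← hq, ZMod.natCast_eq_zero_iff]; exact hq'.two_dvd
      rw [Even.neg_one_pow (hq'.mul_left p), if_neg (by simp [this])]
    · have hi : i = 1 := by
        obtain ⟨k, rfl⟩ := hp'; rw [← hp]; push_cast; rw [show (2:ZMod 2) = 0 from rfl]; ring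
      have hj : j = 1 := by
        obtain ⟨k, rfl⟩ := hq'; rw [← hq]; push_cast; rw [show (2:ZMod 2) = 0 from rfl]; ring
      rw [Odd.neg_one_pow (hp'.mul hq'), if_pos ⟨hi, hj⟩]

theorem iota_comm {q : ℕ} (m : Fin N → ℝ) {y : GA N} (hy : y ∈ Jmod N ^ q) :
    ι ℝ m * y = (-1:ℝ)^q • (y * ι ℝ m) := by
  induction q generalizing y with
  | zero =>
    rw [pow_zero] at hy
    obtain ⟨r, rfl⟩ := Submodule.mem_one.mp hy
    simp [Algebra.commutes]
  | succ n ih =>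
    rw [pow_succ'] at hy
    refine Submodule.mul_induction_on
      (C := fun y => ι ℝ m * y = (-1:ℝ)^(n+1) • (y * ι ℝ m)) hy ?_ ?_
    · intro a ha b hb
      obtain ⟨v, rfl⟩ := ha
      have h1 : ι ℝ m * ι ℝ v = -(ι ℝ v * ι ℝ m) :=
        eq_neg_of_add_eq_zero_left (ι_add_mul_swap m v)
      calc ι ℝ m * (ι ℝ v * b) = (ι ℝ m * ι ℝ v) * b := (mul_assoc _ _ _).symm
        _ = -(ι ℝ v * (ι ℝ m * b)) := by rw [h1, neg_mul, mul_assoc]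
        _ = -(ι ℝ v * ((-1:ℝ)^n • (b * ι ℝ m))) := by rw [ih hb]
        _ = (-1:ℝ)^(n+1) • (ι ℝ v * b * ι ℝ m) := by
            rw [mul_smul_comm, pow_succ, mul_comm ((-1:ℝ)^n), mul_smul, neg_one_smul, mul_assoc]
    · intro x y h1 h2; rw [mul_add, h1, h2, ← smul_add, ← add_mul]

theorem pow_deg_comm {p q : ℕ} {x y : GA N} (hx : x ∈ Jmod N ^ p) (hy : y ∈ Jmod N ^ q) :
    x * y = (-1:ℝ)^(p*q) • (y * x) := by
  induction p generalizing x with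
  | zero =>
    rw [pow_zero] at hx
    obtain ⟨r, rfl⟩ := Submodule.mem_one.mp hx
    simp [Algebra.commutes]
  | succ n ih =>
    rw [pow_succ'] at hx
    refine Submodule.mul_induction_on
      (C := fun x => x * y = (-1:ℝ)^((n+1)*q) • (y * x)) hx ?_ ?_
    · intro a ha b hb
      obtain ⟨v, rfl⟩ := ha
      calc ι ℝ v * b * y = ι ℝ v * (b * y) := mul_assoc _ _ _
        _ = ι ℝ v * ((-1:ℝ)^(n*q) • (y * b)) := by rw [ih hb]
        _ = (-1:ℝ)^(n*q) • (ι ℝ v * y * b) := by rw [mul_smul_comm, mul_assoc]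
        _ = (-1:ℝ)^(n*q) • (((-1:ℝ)^q • (y * ι ℝ v)) * b) := by rw [iota_comm v hy]
        _ = (-1:ℝ)^((n+1)*q) • (y * (ι ℝ v * b)) := by
            rw [smul_mul_assoc, smul_smul, ← pow_add, mul_assoc]
            ring_nf
    · intro a b h1 h2; rw [add_mul, h1, h2, ← smul_add, ← mul_add]

theorem evenOdd_comm {i j : ZMod 2} {x y : GA N}
    (hx : x ∈ CliffordAlgebra.evenOdd (0 : QuadraticForm ℝ (Fin N → ℝ)) i)
    (hy : y ∈ CliffordAlgebra.evenOdd (0 : QuadraticForm ℝ (Fin N → ℝ)) j) :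
    x * y = (if i = 1 ∧ j = 1 then (-1:ℝ) else 1) • (y * x) := by
  rw [evenOdd_eq_iSup] at hx hy
  refine Submodule.iSup_induction _
    (motive := fun x => x * y = (if i = 1 ∧ j = 1 then (-1:ℝ) else 1) • (y * x)) hx ?_ (by simp) ?_
  · rintro ⟨p, hp⟩ a ha
    refine Submodule.iSup_induction _
      (motive := fun y => a * y = (if i = 1 ∧ j = 1 then (-1:ℝ) else 1) • (y * a)) hy ?_ (by simp) ?_
    · rintro ⟨q, hq⟩ b hb
      rw [pow_deg_comm ha hb, sign_eq hp hq]
    · intro u v h1 h2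
      rw [mul_add, h1, h2, ← smul_add, ← add_mul]
  · intro u v h1 h2
    rw [add_mul, h1, h2, ← smul_add, ← mul_add]

lemma comm_even_left {j : ZMod 2} {x y : GA N}
    (hx : x ∈ CliffordAlgebra.evenOdd (0 : QuadraticForm ℝ (Fin N → ℝ)) 0)
    (hy : y ∈ CliffordAlgebra.evenOdd (0 : QuadraticForm ℝ (Fin N → ℝ)) j) :
    x * y = y * x := by
  simpa [show (0:ZMod 2) ≠ 1 by decide] using evenOdd_comm hx hy

lemma comm_even_right {i : ZMod 2} {x y : GA N}
    (hx : x ∈ CliffordAlgebra.evenOdd (0 : QuadraticForm ℝ (Fin N → ℝ)) i)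
    (hy : y ∈ CliffordAlgebra.evenOdd (0 : QuadraticForm ℝ (Fin N → ℝ)) 0) :
    x * y = y * x := by
  simpa [show (0:ZMod 2) ≠ 1 by decide] using evenOdd_comm hx hy

lemma anticomm {x y : GA N}
    (hx : x ∈ CliffordAlgebra.evenOdd (0 : QuadraticForm ℝ (Fin N → ℝ)) 1)
    (hy : y ∈ CliffordAlgebra.evenOdd (0 : QuadraticForm ℝ (Fin N → ℝ)) 1) :
    x * y = -(y * x) := by
  simpa using evenOdd_comm hx hy

/-! ### Supermatrices -/

variable {m k : ℕ}

def pr : Fin m ⊕ Fin k → ZMod 2 := Sum.elim (fun _ => 0) (fun _ => 1)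

@[simp] lemma pr_inl (i : Fin m) : (pr (Sum.inl i : Fin m ⊕ Fin k)) = (0 : ZMod 2) := rfl
@[simp] lemma pr_inr (i : Fin k) : (pr (Sum.inr i : Fin m ⊕ Fin k)) = (1 : ZMod 2) := rfl

lemma isSuperMat_iff {M : Matrix (Fin m ⊕ Fin k) (Fin m ⊕ Fin k) (GA N)} :
    IsSuperMat M ↔ ∀ a b, M a b ∈
      CliffordAlgebra.evenOdd (0 : QuadraticForm ℝ (Fin N → ℝ)) (pr a + pr b) := by
  constructor
  · rintro ⟨h11, h12, h21, h22⟩ a b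
    rcases a with i | i <;> rcases b with j | j
    · simpa [GA.IsEven, GA.IsOdd, Matrix.toBlocks₁₁, Matrix.toBlocks₁₂, Matrix.toBlocks₂₁, Matrix.toBlocks₂₂] using h11 i j
    · simpa [GA.IsEven, GA.IsOdd, Matrix.toBlocks₁₁, Matrix.toBlocks₁₂, Matrix.toBlocks₂₁, Matrix.toBlocks₂₂] using h12 i j
    · simpa [GA.IsEven, GA.IsOdd, Matrix.toBlocks₁₁, Matrix.toBlocks₁₂, Matrix.toBlocks₂₁, Matrix.toBlocks₂₂] using h21 i j
    · simpa [GA.IsEven, GA.IsOdd, Matrix.toBlocks₁₁, Matrix.toBlocks₁₂, Matrix.toBlocks₂₁, Matrix.toBlocks₂₂, show (1:ZMod 2) + 1 = 0 from rfl] using h22 i j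
  · intro h
    exact ⟨fun i j => by simpa [GA.IsEven, GA.IsOdd, Matrix.toBlocks₁₁, Matrix.toBlocks₁₂, Matrix.toBlocks₂₁, Matrix.toBlocks₂₂] using h (Sum.inl i) (Sum.inl j),
      fun i j => by simpa [GA.IsEven, GA.IsOdd, Matrix.toBlocks₁₁, Matrix.toBlocks₁₂, Matrix.toBlocks₂₁, Matrix.toBlocks₂₂] using h (Sum.inl i) (Sum.inr j),
      fun i j => by simpa [GA.IsEven, GA.IsOdd, Matrix.toBlocks₁₁, Matrix.toBlocks₁₂, Matrix.toBlocks₂₁, Matrix.toBlocks₂₂] using h (Sum.inr i) (Sum.inl j),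
      fun i j => by simpa [GA.IsEven, GA.IsOdd, Matrix.toBlocks₁₁, Matrix.toBlocks₁₂, Matrix.toBlocks₂₁, Matrix.toBlocks₂₂, show (1:ZMod 2) + 1 = 0 from rfl] using h (Sum.inr i) (Sum.inr j)⟩

@[simp] lemma superT_ll (M : Matrix (Fin m ⊕ Fin k) (Fin m ⊕ Fin k) (GA N)) (i j) :
    superT M (Sum.inl i) (Sum.inl j) = M (Sum.inl j) (Sum.inl i) := rfl
@[simp] lemma superT_lr (M : Matrix (Fin m ⊕ Fin k) (Fin m ⊕ Fin k) (GA N)) (i j) :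
    superT M (Sum.inl i) (Sum.inr j) = M (Sum.inr j) (Sum.inl i) := rfl
@[simp] lemma superT_rl (M : Matrix (Fin m ⊕ Fin k) (Fin m ⊕ Fin k) (GA N)) (i j) :
    superT M (Sum.inr i) (Sum.inl j) = -M (Sum.inl j) (Sum.inr i) := rfl
@[simp] lemma superT_rr (M : Matrix (Fin m ⊕ Fin k) (Fin m ⊕ Fin k) (GA N)) (i j) :
    superT M (Sum.inr i) (Sum.inr j) = M (Sum.inr j) (Sum.inr i) := rfl

lemma isSuperMat_mul {M P : Matrix (Fin m ⊕ Fin k) (Fin m ⊕ Fin k) (GA N)}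
    (hM : IsSuperMat M) (hP : IsSuperMat P) : IsSuperMat (M * P) := by
  rw [isSuperMat_iff] at *
  intro a b
  rw [Matrix.mul_apply]
  refine Submodule.sum_mem _ fun c _ => ?_
  have := SetLike.mul_mem_graded (hM a c) (hP c b)
  convert this using 2
  have h0 : pr c + pr c = 0 := CharTwo.add_self_eq_zero _
  rw [add_assoc, ← add_assoc (pr c), h0, zero_add]

lemma isSuperMat_one : IsSuperMat (1 : Matrix (Fin m ⊕ Fin k) (Fin m ⊕ Fin k) (GA N)) := by
  rw [isSuperMat_iff]
  intro a b
  by_cases h : a = b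
  · subst h
    simp only [Matrix.one_apply_eq]
    have h0 : pr a + pr a = 0 := CharTwo.add_self_eq_zero _
    rw [h0]
    exact SetLike.one_mem_graded _
  · rw [Matrix.one_apply_ne h]; exact Submodule.zero_mem _

lemma isSuperMat_pow {M : Matrix (Fin m ⊕ Fin k) (Fin m ⊕ Fin k) (GA N)}
    (hM : IsSuperMat M) (p : ℕ) : IsSuperMat (M ^ p) := by
  induction p with
  | zero => rw [pow_zero]; exact isSuperMat_one
  | succ p ih => rw [pow_succ]; exact isSuperMat_mul ih hM

theorem superT_mul {M P : Matrix (Fin m ⊕ Fin k) (Fin m ⊕ Fin k) (GA N)}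
    (hM : IsSuperMat M) (hP : IsSuperMat P) :
    superT (M * P) = superT P * superT M := by
  rw [isSuperMat_iff] at hM hP
  funext a b
  rcases a with i | i <;> rcases b with j | j <;>
    simp only [superT_ll, superT_lr, superT_rl, superT_rr, Matrix.mul_apply,
      Matrix.neg_apply] <;>
    rw [Fintype.sum_sum_type, Fintype.sum_sum_type]
  · congr 1
    · refine Finset.sum_congr rfl fun c _ => ?_
      rw [superT_ll, superT_ll]
      have h1 := hM (Sum.inl j) (Sum.inl c); have h2 := hP (Sum.inl c) (Sum.inl i)
      simp only [pr_inl, pr_inr, zero_add, add_zero] at h1 h2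
      exact comm_even_left h1 h2
    · refine Finset.sum_congr rfl fun c _ => ?_
      rw [superT_lr, superT_rl, mul_neg]
      have h1 := hM (Sum.inl j) (Sum.inr c); have h2 := hP (Sum.inr c) (Sum.inl i)
      simp only [pr_inl, pr_inr, zero_add, add_zero] at h1 h2
      rw [anticomm h1 h2]
  · congr 1
    · refine Finset.sum_congr rfl fun c _ => ?_
      rw [superT_ll, superT_lr]
      have h1 := hM (Sum.inr j) (Sum.inl c); have h2 := hP (Sum.inl c) (Sum.inl i)
      simp only [pr_inl, pr_inr, zero_add, add_zero] at h1 h2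
      exact comm_even_right h1 h2
    · refine Finset.sum_congr rfl fun c _ => ?_
      rw [superT_lr, superT_rr]
      have h1 := hM (Sum.inr j) (Sum.inr c); have h2 := hP (Sum.inr c) (Sum.inl i)
      simp only [pr_inl, pr_inr, zero_add, add_zero] at h1 h2
      exact comm_even_left h1 h2
  · rw [neg_add]
    congr 1
    · rw [← Finset.sum_neg_distrib]
      refine Finset.sum_congr rfl fun c _ => ?_
      rw [superT_rl, superT_ll, neg_mul]
      have h1 := hM (Sum.inl j) (Sum.inl c); have h2 := hP (Sum.inl c) (Sum.inr i)
      simp only [pr_inl, pr_inr, zero_add, add_zero] at h1 h2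
      rw [comm_even_left h1 h2]
    · rw [← Finset.sum_neg_distrib]
      refine Finset.sum_congr rfl fun c _ => ?_
      rw [superT_rr, superT_rl, mul_neg]
      have h1 := hM (Sum.inl j) (Sum.inr c); have h2 := hP (Sum.inr c) (Sum.inr i)
      simp only [pr_inl, pr_inr, zero_add, add_zero] at h1 h2
      rw [comm_even_right h1 h2]
  · congr 1
    · refine Finset.sum_congr rfl fun c _ => ?_
      rw [superT_rl, superT_lr, neg_mul]
      have h1 := hM (Sum.inr j) (Sum.inl c); have h2 := hP (Sum.inl c) (Sum.inr i)
      simp only [pr_inl, pr_inr, zero_add, add_zero] at h1 h2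
      rw [anticomm h1 h2]
    · refine Finset.sum_congr rfl fun c _ => ?_
      rw [superT_rr, superT_rr]
      have h1 := hM (Sum.inr j) (Sum.inr c); have h2 := hP (Sum.inr c) (Sum.inr i)
      simp only [pr_inl, pr_inr, zero_add, add_zero] at h1 h2
      exact comm_even_left h1 h2

/-- `superT` as a linear map. -/
noncomputable def superTL : Matrix (Fin m ⊕ Fin k) (Fin m ⊕ Fin k) (GA N)
    →ₗ[ℝ] Matrix (Fin m ⊕ Fin k) (Fin m ⊕ Fin k) (GA N) where
  toFun := superT
  map_add' X Y := by
    funext a b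
    rcases a with i | i <;> rcases b with j | j <;>
      simp [Matrix.add_apply, neg_add, add_comm]
  map_smul' c X := by
    funext a b
    rcases a with i | i <;> rcases b with j | j <;>
      simp [Matrix.smul_apply]

lemma superT_eq_superTL (M : Matrix (Fin m ⊕ Fin k) (Fin m ⊕ Fin k) (GA N)) :
    superT M = superTL M := rfl

lemma superT_one : superT (1 : Matrix (Fin m ⊕ Fin k) (Fin m ⊕ Fin k) (GA N)) = 1 := by
  funext a b
  rcases a with i | i <;> rcases b with j | j <;>
    simp [Matrix.one_apply, eq_comm]

lemma superT_zero : superT (0 : Matrix (Fin m ⊕ Fin k) (Fin m ⊕ Fin k) (GA N)) = 0 := by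
  funext a b
  rcases a with i | i <;> rcases b with j | j <;> simp

lemma superT_pow {M : Matrix (Fin m ⊕ Fin k) (Fin m ⊕ Fin k) (GA N)}
    (hM : IsSuperMat M) (p : ℕ) : superT (M ^ p) = (superT M) ^ p := by
  induction p with
  | zero => rw [pow_zero, pow_zero, superT_one]
  | succ p ih =>
    rw [pow_succ, superT_mul (isSuperMat_pow hM p) hM, ih, pow_succ']

lemma superT_expNil {M : Matrix (Fin m ⊕ Fin k) (Fin m ⊕ Fin k) (GA N)}
    (hM : IsSuperMat M) : superT (expNil M) = expNil (superT M) := by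
  rw [expNil, expNil, superT_eq_superTL, map_sum]
  refine Finset.sum_congr rfl fun p _ => ?_
  rw [LinearMap.map_smul, ← superT_eq_superTL, superT_pow hM]

/-! ### Nilpotency filtration -/

theorem Jpow_top : (Jmod N) ^ (N + 1) = ⊥ := by
  have h : (Jmod N)^(N+1)
      = Submodule.span ℝ (Set.range (ιMulti ℝ (N+1) (M := Fin N → ℝ))) :=
    (ιMulti_span_fixedDegree ℝ (N+1)).symm
  rw [h, Submodule.span_eq_bot]
  rintro x ⟨v, rfl⟩
  refine AlternatingMap.map_linearDependent _ v fun h => ?_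
  have := h.fintype_card_le_finrank
  simp [Module.finrank_fintype_fun_eq_card] at this

noncomputable def Sdeg (N c : ℕ) : Submodule ℝ (GA N) :=
  ⨆ i : {i : ℕ // c ≤ i}, (Jmod N) ^ (i : ℕ)

theorem Sdeg_antitone {c d : ℕ} (h : c ≤ d) : Sdeg N d ≤ Sdeg N c := by
  refine iSup_le fun ⟨i, hi⟩ => ?_
  exact le_iSup_of_le ⟨i, h.trans hi⟩ le_rfl

theorem Jpow_le_Sdeg {c i : ℕ} (h : c ≤ i) : (Jmod N) ^ i ≤ Sdeg N c :=
  le_iSup_of_le ⟨i, h⟩ le_rfl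

theorem Sdeg_mul {c d : ℕ} {x y : GA N} (hx : x ∈ Sdeg N c) (hy : y ∈ Sdeg N d) :
    x * y ∈ Sdeg N (c + d) := by
  refine Submodule.iSup_induction _ (motive := fun x => x * y ∈ Sdeg N (c+d)) hx ?_ (by simp) ?_
  · rintro ⟨i, hi⟩ a ha
    refine Submodule.iSup_induction _ (motive := fun y => a * y ∈ Sdeg N (c+d)) hy ?_ (by simp) ?_
    · rintro ⟨j, hj⟩ b hb
      refine Jpow_le_Sdeg (Nat.add_le_add hi hj) ?_
      rw [pow_add]
      exact Submodule.mul_mem_mul ha hb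
    · intro u v h1 h2; rw [mul_add]; exact Submodule.add_mem _ h1 h2
  · intro u v h1 h2; rw [add_mul]; exact Submodule.add_mem _ h1 h2

theorem Sdeg_top_eq_bot {c : ℕ} (h : N + 1 ≤ c) : Sdeg N c = ⊥ := by
  rw [eq_bot_iff]
  refine iSup_le ?_
  rintro ⟨i, hi⟩
  show (Jmod N)^i ≤ ⊥
  have h2 : (Jmod N)^i = (Jmod N)^(N+1) * (Jmod N)^(i - (N+1)) := by
    rw [← pow_add]; congr 1; omega
  rw [h2, Jpow_top, Submodule.bot_mul]

theorem body_diff_mem (x : GA N) :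
    x - algebraMap ℝ (GA N) (algebraMapInv x) ∈ Sdeg N 1 := by
  induction x using ExteriorAlgebra.induction with
  | algebraMap r => simp
  | ι v =>
    have h0 : algebraMapInv ((ι ℝ) v) = (0:ℝ) := by simp [algebraMapInv]
    rw [h0, map_zero, sub_zero]
    exact Jpow_le_Sdeg le_rfl (by simpa [pow_one] using LinearMap.mem_range_self (ι ℝ) v)
  | mul a b iha ihb =>
    have key : a * b - algebraMap ℝ (GA N) (algebraMapInv (a*b))
        = (a - algebraMap ℝ (GA N) (algebraMapInv a))
            * (b - algebraMap ℝ (GA N) (algebraMapInv b))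
          + algebraMapInv a • (b - algebraMap ℝ (GA N) (algebraMapInv b))
          + algebraMapInv b • (a - algebraMap ℝ (GA N) (algebraMapInv a)) := by
      rw [_root_.map_mul, _root_.map_mul]
      rw [Algebra.smul_def, Algebra.smul_def]
      rw [show algebraMap ℝ (GA N) (algebraMapInv b)
          * (a - algebraMap ℝ (GA N) (algebraMapInv a))
          = (a - algebraMap ℝ (GA N) (algebraMapInv a))
            * algebraMap ℝ (GA N) (algebraMapInv b) from Algebra.commutes (algebraMapInv b) _]
      noncomm_ring
    rw [key]
    refine Submodule.add_mem _ (Submodule.add_mem _ ?_ (Submodule.smul_mem _ _ ihb))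
      (Submodule.smul_mem _ _ iha)
    exact Sdeg_antitone (by omega) (Sdeg_mul iha ihb)
  | add a b iha ihb =>
    have key : a + b - algebraMap ℝ (GA N) (algebraMapInv (a+b))
        = (a - algebraMap ℝ (GA N) (algebraMapInv a))
          + (b - algebraMap ℝ (GA N) (algebraMapInv b)) := by
      rw [_root_.map_add, _root_.map_add]; abel
    rw [key]; exact Submodule.add_mem _ iha ihb

theorem mem_Sdeg_one_of_body_zero {x : GA N} (h : algebraMapInv x = 0) : x ∈ Sdeg N 1 := by
  have := body_diff_mem x
  rwa [h, map_zero, sub_zero] at this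

theorem Sdeg_zero_top : Sdeg N 0 = ⊤ := by
  rw [eq_top_iff]
  intro x _
  have h1 := body_diff_mem x
  have h2 : x = (x - algebraMap ℝ (GA N) (algebraMapInv x))
      + algebraMap ℝ (GA N) (algebraMapInv x) := by abel
  rw [h2]
  refine Submodule.add_mem _ (Sdeg_antitone (by omega) h1) ?_
  refine Submodule.mem_iSup_of_mem ⟨0, le_rfl⟩ ?_
  rw [pow_zero]
  exact Submodule.mem_one.mpr ⟨algebraMapInv x, rfl⟩

theorem entries_mul_mem {a b : ℕ} {X Y : Matrix (Fin m ⊕ Fin k) (Fin m ⊕ Fin k) (GA N)}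
    (hX : ∀ i j, X i j ∈ Sdeg N a) (hY : ∀ i j, Y i j ∈ Sdeg N b) :
    ∀ i j, (X * Y) i j ∈ Sdeg N (a + b) := by
  intro i j
  rw [Matrix.mul_apply]
  exact Submodule.sum_mem _ fun c _ => Sdeg_mul (hX i c) (hY c j)

theorem entries_pow_mem {X : Matrix (Fin m ⊕ Fin k) (Fin m ⊕ Fin k) (GA N)}
    (hX : ∀ i j, X i j ∈ Sdeg N 1) (p : ℕ) :
    ∀ i j, (X ^ p) i j ∈ Sdeg N p := by
  induction p with
  | zero => intro i j; rw [Sdeg_zero_top]; trivial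
  | succ p ih =>
    intro i j
    rw [pow_succ]
    exact entries_mul_mem ih hX i j

theorem triple_vanish {p q : ℕ} {X Y B : Matrix (Fin m ⊕ Fin k) (Fin m ⊕ Fin k) (GA N)}
    (hX : ∀ i j, X i j ∈ Sdeg N 1) (hY : ∀ i j, Y i j ∈ Sdeg N 1)
    (h : N + 1 ≤ p + q) : X ^ p * B * Y ^ q = 0 := by
  have hB : ∀ i j, B i j ∈ Sdeg N 0 := by intro i j; rw [Sdeg_zero_top]; trivial
  have := entries_mul_mem (entries_mul_mem (entries_pow_mem hX p) hB) (entries_pow_mem hY q)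
  funext i j
  have h2 := this i j
  rw [show p + 0 + q = p + q from by omega] at h2
  have h3 : Sdeg N (p+q) = ⊥ := Sdeg_top_eq_bot h
  rw [h3, Submodule.mem_bot] at h2
  simpa using h2

/-! ### Exponential identities -/

lemma fact_coeff (p q : ℕ) : (((p+q).factorial:ℝ))⁻¹ * ((p+q).choose p : ℝ)
    = ((p.factorial:ℝ))⁻¹ * ((q.factorial:ℝ))⁻¹ := by
  have h := Nat.choose_mul_factorial_mul_factorial (Nat.le_add_right p q)
  rw [Nat.add_sub_cancel_left] at h
  have h2 : ((p+q).choose p : ℝ) * (p.factorial:ℝ) * (q.factorial:ℝ)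
      = ((p+q).factorial:ℝ) := by
    exact_mod_cast congrArg Nat.cast h
  have hp : (p.factorial:ℝ) ≠ 0 := Nat.cast_ne_zero.mpr p.factorial_ne_zero
  have hq : (q.factorial:ℝ) ≠ 0 := Nat.cast_ne_zero.mpr q.factorial_ne_zero
  have hr : (((p+q).factorial:ℝ)) ≠ 0 := Nat.cast_ne_zero.mpr (p+q).factorial_ne_zero
  field_simp
  linear_combination h2

theorem expNil_add {X Y : Matrix (Fin m ⊕ Fin k) (Fin m ⊕ Fin k) (GA N)}
    (hX : ∀ i j, X i j ∈ Sdeg N 1) (hY : ∀ i j, Y i j ∈ Sdeg N 1) (hc : Commute X Y) :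
    expNil (X + Y) = expNil X * expNil Y := by
  classical
  set F := Finset.range (N+1) ×ˢ Finset.range (N+1) with hF
  set T := F.filter (fun pq => pq.1 + pq.2 ≤ N) with hT
  set f : ℕ × ℕ → Matrix (Fin m ⊕ Fin k) (Fin m ⊕ Fin k) (GA N) :=
    fun pq => ((pq.1.factorial:ℝ))⁻¹ • ((pq.2.factorial:ℝ))⁻¹ • (X ^ pq.1 * Y ^ pq.2) with hf
  have step1 : expNil X * expNil Y = ∑ pq ∈ F, f pq := by
    rw [expNil, expNil, Finset.sum_mul_sum, hF, Finset.sum_product]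
    refine Finset.sum_congr rfl fun p _ => Finset.sum_congr rfl fun q _ => ?_
    rw [hf]
    rw [smul_mul_assoc, mul_smul_comm]
  have step2 : ∑ pq ∈ F, f pq = ∑ pq ∈ T, f pq := by
    refine (Finset.sum_subset (Finset.filter_subset _ _) ?_).symm
    intro pq hpq hnpq
    have hgt : N + 1 ≤ pq.1 + pq.2 := by
      by_contra hcon
      exact hnpq (Finset.mem_filter.mpr ⟨hpq, by omega⟩)
    have hz : X ^ pq.1 * Y ^ pq.2 = 0 := by
      have := triple_vanish (B := 1) hX hY hgt
      rwa [mul_one] at this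
    simp only [hf]
    rw [hz, smul_zero, smul_zero]
  have step3 : expNil (X + Y) = ∑ pq ∈ T, f pq := by
    rw [expNil]
    have expand : ∀ r : ℕ, ((r.factorial:ℝ))⁻¹ • (X + Y) ^ r
        = ∑ pq ∈ Finset.HasAntidiagonal.antidiagonal r, f pq := by
      intro r
      rw [hc.add_pow', Finset.smul_sum]
      refine Finset.sum_congr rfl fun pq hpq => ?_
      have hr : pq.1 + pq.2 = r := Finset.HasAntidiagonal.mem_antidiagonal.mp hpq
      simp only [hf]
      rw [← Nat.cast_smul_eq_nsmul ℝ (r.choose pq.1) (X ^ pq.1 * Y ^ pq.2), smul_smul, smul_smul]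
      rw [← hr, fact_coeff]
    rw [Finset.sum_congr rfl fun r _ => expand r]
    rw [← Finset.sum_fiberwise_of_maps_to (g := fun pq : ℕ × ℕ => pq.1 + pq.2)
      (t := Finset.range (N+1))
      (fun pq hpq => by
        have h := (Finset.mem_filter.mp hpq).2
        simp only [Finset.mem_range] at h ⊢
        omega)]
    refine Finset.sum_congr rfl fun r hr => ?_
    rw [Finset.mem_range] at hr
    congr 1
    ext pq
    rw [hT, Finset.mem_filter, Finset.mem_filter, hF, Finset.mem_product,
      Finset.HasAntidiagonal.mem_antidiagonal, Finset.mem_range, Finset.mem_range]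
    omega
  rw [step3, step1, step2]

lemma expNil_zero : expNil (0 : Matrix (Fin m ⊕ Fin k) (Fin m ⊕ Fin k) (GA N)) = 1 := by
  rw [expNil]
  rw [Finset.sum_eq_single 0]
  · simp
  · intro j _ hj
    rw [zero_pow hj, smul_zero]
  · intro h
    exact absurd (Finset.mem_range.mpr (by omega)) h

lemma expNil_pow {X : Matrix (Fin m ⊕ Fin k) (Fin m ⊕ Fin k) (GA N)}
    (hX : ∀ i j, X i j ∈ Sdeg N 1) (p : ℕ) :
    (expNil X) ^ p = expNil ((p : ℝ) • X) := by
  induction p with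
  | zero => rw [pow_zero, Nat.cast_zero, zero_smul, expNil_zero]
  | succ p ih =>
    have hsX : ∀ i j, ((p:ℝ) • X) i j ∈ Sdeg N 1 := fun i j => by
      rw [Matrix.smul_apply]
      exact Submodule.smul_mem _ _ (hX i j)
    rw [pow_succ, ih, ← expNil_add hsX hX ((Commute.refl X).smul_left (p:ℝ))]
    congr 1
    push_cast
    rw [add_smul, one_smul]

theorem vand_smul {nn : ℕ} {V : Type*} [AddCommGroup V] [Module ℝ V] (v : Fin nn → V)
    (h : ∀ x : Fin nn, ∑ r : Fin nn, ((x : ℕ) : ℝ) ^ (r : ℕ) • v r = 0) (r : Fin nn) :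
    v r = 0 := by
  classical
  set M : Matrix (Fin nn) (Fin nn) ℝ := Matrix.vandermonde (fun x : Fin nn => ((x : ℕ) : ℝ))
    with hM
  have hdet : IsUnit M.det := by
    rw [hM]
    refine (Matrix.det_vandermonde_ne_zero_iff.mpr ?_).isUnit
    intro a b hab
    exact Fin.ext (Nat.cast_injective hab)
  have hinv : M⁻¹ * M = 1 := Matrix.nonsing_inv_mul M hdet
  have key : ∀ j : Fin nn, (∑ x : Fin nn, (M⁻¹ j x) • (∑ s : Fin nn, M x s • v s)) = v j := by
    intro j
    have step : (∑ x : Fin nn, (M⁻¹ j x) • (∑ s : Fin nn, M x s • v s))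
        = ∑ s : Fin nn, ((M⁻¹ * M) j s) • v s := by
      simp only [Finset.smul_sum, smul_smul]
      rw [Finset.sum_comm]
      refine Finset.sum_congr rfl fun s _ => ?_
      rw [Matrix.mul_apply, Finset.sum_smul]
    rw [step, hinv]
    rw [show (∑ s : Fin nn, (1 : Matrix (Fin nn) (Fin nn) ℝ) j s • v s)
        = ∑ s : Fin nn, (if j = s then (1:ℝ) else 0) • v s from
      Finset.sum_congr rfl fun s _ => by rw [Matrix.one_apply]]
    simp [Finset.sum_ite_eq]
  have hkey := key r
  have hz : ∀ x : Fin nn, (∑ s : Fin nn, M x s • v s) = 0 := by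
    intro x
    have := h x
    simpa [hM, Matrix.vandermonde] using this
  rw [show (∑ x : Fin nn, (M⁻¹ r x) • (∑ s : Fin nn, M x s • v s)) = 0 from by
    simp [hz]] at hkey
  exact hkey.symm

end O0Aux


open O0Aux in
set_option maxHeartbeats 2000000 in
/-- if `𝐙` is a nilpotent supermatrix (all entries with zero body) such
that `e^𝐙 ∈ O₀`, i.e. `(e^𝐙)^{ST} Q e^𝐙 = Q`, then `𝐙^{ST} Q + Q 𝐙 = 0`. -/
theorem exp_nilpotent_mem_O0_implies_so0 (N m n : ℕ)
    (Z : Matrix (Fin m ⊕ Fin (2*n)) (Fin m ⊕ Fin (2*n)) (GA N))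
    (hZs : IsSuperMat Z)
    (hZnil : ∀ i j, ExteriorAlgebra.algebraMapInv (Z i j) = 0)
    (hE : superT (expNil Z) * Qm N m n * expNil Z = Qm N m n) :
    superT Z * Qm N m n + Qm N m n * Z = 0 := by
  classical
  by_cases hN0 : N = 0
  · subst hN0
    have hZ0 : Z = 0 := by
      funext i j
      have h1 : Z i j ∈ O0Aux.Sdeg 0 1 := O0Aux.mem_Sdeg_one_of_body_zero (hZnil i j)
      rw [O0Aux.Sdeg_top_eq_bot le_rfl, Submodule.mem_bot] at h1
      exact h1
    rw [hZ0, O0Aux.superT_zero, Matrix.zero_mul, Matrix.mul_zero, add_zero]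
  · have hN1 : 1 ≤ N := by omega
    set Q : Matrix (Fin m ⊕ Fin (2*n)) (Fin m ⊕ Fin (2*n)) (GA N) := Qm N m n with hQdef
    set A : Matrix (Fin m ⊕ Fin (2*n)) (Fin m ⊕ Fin (2*n)) (GA N) := superT Z with hAdef
    have hZ1 : ∀ i j, Z i j ∈ O0Aux.Sdeg N 1 :=
      fun i j => O0Aux.mem_Sdeg_one_of_body_zero (hZnil i j)
    have hA1 : ∀ i j, A i j ∈ O0Aux.Sdeg N 1 := by
      intro a b
      rcases a with i|i <;> rcases b with j|j
      · rw [hAdef, O0Aux.superT_ll]; exact hZ1 _ _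
      · rw [hAdef, O0Aux.superT_lr]; exact hZ1 _ _
      · rw [hAdef, O0Aux.superT_rl]; exact Submodule.neg_mem _ (hZ1 _ _)
      · rw [hAdef, O0Aux.superT_rr]; exact hZ1 _ _
    have zip : ∀ p : ℕ, (superT (expNil Z))^p * Q * (expNil Z)^p = Q := by
      intro p
      induction p with
      | zero => simp
      | succ p ih =>
        rw [pow_succ', pow_succ]
        calc superT (expNil Z) * superT (expNil Z) ^ p * Q * ((expNil Z)^p * expNil Z)
            = superT (expNil Z) * (superT (expNil Z) ^ p * Q * (expNil Z)^p) * expNil Z := by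
              simp only [mul_assoc]
          _ = superT (expNil Z) * Q * expNil Z := by rw [ih]
          _ = Q := hE
    have hsup : superT (expNil Z) = expNil A := by
      rw [hAdef]; exact O0Aux.superT_expNil hZs
    have H : ∀ p : ℕ, expNil ((p:ℝ) • A) * Q * expNil ((p:ℝ) • Z) = Q := by
      intro p
      rw [← O0Aux.expNil_pow hA1 p, ← O0Aux.expNil_pow hZ1 p, ← hsup]
      exact zip p
    set F := Finset.range (N+1) ×ˢ Finset.range (N+1) with hF
    have expand : ∀ t : ℝ, expNil (t • A) * Q * expNil (t • Z)
        = ∑ pq ∈ F, (t^(pq.1+pq.2) * (((pq.1.factorial:ℝ))⁻¹ * ((pq.2.factorial:ℝ))⁻¹))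
            • (A^pq.1 * Q * Z^pq.2) := by
      intro t
      rw [expNil, expNil, Finset.sum_mul, Finset.sum_mul_sum, hF, Finset.sum_product]
      refine Finset.sum_congr rfl fun p _ => Finset.sum_congr rfl fun q _ => ?_
      rw [smul_pow, smul_pow, smul_smul, smul_smul, smul_mul_assoc, smul_mul_assoc,
        mul_smul_comm, smul_smul]
      congr 1
      rw [pow_add]
      ring
    set vfun : Fin (2*N+1) → Matrix (Fin m ⊕ Fin (2*n)) (Fin m ⊕ Fin (2*n)) (GA N) :=
      fun r =>
        (∑ pq ∈ F.filter (fun pq => pq.1 + pq.2 = (r:ℕ)),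
          (((pq.1.factorial:ℝ))⁻¹ * ((pq.2.factorial:ℝ))⁻¹) • (A^pq.1 * Q * Z^pq.2))
        - (if (r:ℕ) = 0 then Q else 0) with hvfun
    have hv : ∀ x : Fin (2*N+1), ∑ r : Fin (2*N+1), ((x:ℕ):ℝ)^(r:ℕ) • vfun r = 0 := by
      intro x
      have Hx := H (x:ℕ)
      rw [expand (((x:ℕ)):ℝ)] at Hx
      have e1 : ∑ r : Fin (2*N+1), ((x:ℕ):ℝ)^(r:ℕ) • vfun r
          = (∑ r : Fin (2*N+1), ((x:ℕ):ℝ)^(r:ℕ) •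
              ∑ pq ∈ F.filter (fun pq => pq.1 + pq.2 = (r:ℕ)),
                (((pq.1.factorial:ℝ))⁻¹ * ((pq.2.factorial:ℝ))⁻¹) • (A^pq.1 * Q * Z^pq.2))
            - (∑ r : Fin (2*N+1), ((x:ℕ):ℝ)^(r:ℕ) • if (r:ℕ) = 0 then Q else 0) := by
        rw [← Finset.sum_sub_distrib]
        refine Finset.sum_congr rfl fun r _ => ?_
        rw [hvfun, smul_sub]
      have e2 : (∑ r : Fin (2*N+1), ((x:ℕ):ℝ)^(r:ℕ) • if (r:ℕ) = 0 then Q else 0) = Q := by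
        rw [Finset.sum_eq_single (0 : Fin (2*N+1))]
        · simp
        · intro r _ hr
          rw [if_neg (fun h => hr (Fin.ext (by simpa using h))), smul_zero]
        · intro h
          exact absurd (Finset.mem_univ _) h
      have e3 : (∑ r : Fin (2*N+1), ((x:ℕ):ℝ)^(r:ℕ) •
              ∑ pq ∈ F.filter (fun pq => pq.1 + pq.2 = (r:ℕ)),
                (((pq.1.factorial:ℝ))⁻¹ * ((pq.2.factorial:ℝ))⁻¹) • (A^pq.1 * Q * Z^pq.2))
          = ∑ pq ∈ F, (((x:ℕ):ℝ)^(pq.1+pq.2)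
                * (((pq.1.factorial:ℝ))⁻¹ * ((pq.2.factorial:ℝ))⁻¹)) • (A^pq.1 * Q * Z^pq.2) := by
        rw [Fin.sum_univ_eq_sum_range (fun r => ((x:ℕ):ℝ)^r •
              ∑ pq ∈ F.filter (fun pq => pq.1 + pq.2 = r),
                (((pq.1.factorial:ℝ))⁻¹ * ((pq.2.factorial:ℝ))⁻¹) • (A^pq.1 * Q * Z^pq.2))]
        rw [← Finset.sum_fiberwise_of_maps_to (g := fun pq : ℕ × ℕ => pq.1 + pq.2)
          (t := Finset.range (2*N+1))
          (fun pq hpq => by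
            rw [hF, Finset.mem_product, Finset.mem_range, Finset.mem_range] at hpq
            rw [Finset.mem_range]
            show pq.1 + pq.2 < 2*N+1
            omega)]
        refine Finset.sum_congr rfl fun r _ => ?_
        rw [Finset.smul_sum]
        refine Finset.sum_congr rfl fun pq hpq => ?_
        rw [smul_smul, (Finset.mem_filter.mp hpq).2]
      rw [e1, e3, e2, Hx, sub_self]
    have hv1 := O0Aux.vand_smul vfun hv ⟨1, by omega⟩
    rw [hvfun] at hv1
    simp only at hv1
    have hset : F.filter (fun pq => pq.1 + pq.2 = 1) = {((1:ℕ),(0:ℕ)), ((0:ℕ),(1:ℕ))} := by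
      ext pq
      rw [Finset.mem_filter, hF, Finset.mem_product, Finset.mem_range, Finset.mem_range,
        Finset.mem_insert, Finset.mem_singleton, Prod.ext_iff, Prod.ext_iff]
      omega
    rw [hset] at hv1
    rw [Finset.sum_insert (by simp), Finset.sum_singleton] at hv1
    simp only [Nat.factorial_one, Nat.factorial_zero, Nat.cast_one, inv_one, one_mul, mul_one,
      pow_one, pow_zero, Matrix.mul_one, Matrix.one_mul, one_smul, if_neg (one_ne_zero),
      sub_zero] at hv1
    rw [hQdef, hAdef] at hv1
    convert hv1 using 2

end
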